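/- For every x > 0 and every θ ∈ (0, π/2), the partial derivative of g with respect to θ satisfies (∂g/∂θ)(θ, x) = x · ∫_{θ_Y}^{θ} exp( − ∫_{γ}^{θ} 2·(cos α / sin α) dα ) · (τ(γ) + τ''(γ)) / sin γ dγ. -/

import Mathlib

open Real

/-- Integral representation of the angular derivative of `g`:
`(∂g/∂θ)(θ, x) = x·∫_{θ_Y}^{θ} exp(−∫_γ^θ 2·cot α dα)·(τ(γ) + τ''(γ))/sin γ dγ`. -/
theorem herring_young_derivative_formula
    (τ τ' τ'' : ℝ → ℝ) (τbd : ℝ)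
    (hd1 : ∀ θ ∈ Set.Ioo (0 : ℝ) (π / 2), HasDerivAt τ (τ' θ) θ)
    (hd2 : ∀ θ ∈ Set.Ioo (0 : ℝ) (π / 2), HasDerivAt τ' (τ'' θ) θ)
    (hc : ContinuousOn τ'' (Set.Ioo (0 : ℝ) (π / 2)))
    (θY : ℝ) (hθY : θY ∈ Set.Ioo (0 : ℝ) (π / 2))
    (hHY : Real.cos θY * τ θY - Real.sin θY * τ' θY = τbd)
    (g : ℝ → ℝ → ℝ)
    (hg : ∀ θ y : ℝ, g θ y = τ θ * y / Real.sin θ + τbd * (1 / 2 - y / Real.tan θ)) :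
    ∀ x : ℝ, 0 < x → ∀ θ ∈ Set.Ioo (0 : ℝ) (π / 2),
      HasDerivAt (fun t => g t x)
        (x * ∫ c in θY..θ,
          Real.exp (-∫ α in c..θ, 2 * (Real.cos α / Real.sin α)) *
            ((τ c + τ'' c) / Real.sin c)) θ := by
  intro x hx θ hθ
  have hpi := Real.pi_pos
  have hsub : Set.uIcc θY θ ⊆ Set.Ioo (0 : ℝ) (π / 2) :=
    Set.ordConnected_Ioo.uIcc_subset hθY hθ
  have hsinpos : ∀ c ∈ Set.Ioo (0 : ℝ) (π / 2), 0 < Real.sin c := fun c hcm =>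
    Real.sin_pos_of_pos_of_lt_pi hcm.1 (by nlinarith [hcm.2])
  have hsθ : 0 < Real.sin θ := hsinpos θ hθ
  have hτcont : ContinuousOn τ (Set.Ioo (0 : ℝ) (π / 2)) := fun c hcm =>
    (hd1 c hcm).continuousAt.continuousWithinAt
  -- value of the inner integral
  have hinner : ∀ c ∈ Set.uIcc θY θ,
      (∫ α in c..θ, 2 * (Real.cos α / Real.sin α))
        = 2 * Real.log (Real.sin θ) - 2 * Real.log (Real.sin c) := by
    intro c hcmem
    have hsub2 : Set.uIcc c θ ⊆ Set.Ioo (0 : ℝ) (π / 2) :=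
      Set.ordConnected_Ioo.uIcc_subset (hsub hcmem) hθ
    apply intervalIntegral.integral_eq_sub_of_hasDerivAt
    · intro t ht
      have h := ((Real.hasDerivAt_sin t).log (hsinpos t (hsub2 ht)).ne').const_mul (2 : ℝ)
      simpa using h
    · apply ContinuousOn.intervalIntegrable
      exact continuousOn_const.mul (Real.continuous_cos.continuousOn.div
        Real.continuous_sin.continuousOn fun t ht => (hsinpos t (hsub2 ht)).ne')
  -- rewrite the integrand
  have hcongr : Set.EqOn
      (fun c => Real.exp (-∫ α in c..θ, 2 * (Real.cos α / Real.sin α)) *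
        ((τ c + τ'' c) / Real.sin c))
      (fun c => ((Real.sin θ) ^ 2)⁻¹ * (Real.sin c * (τ c + τ'' c)))
      (Set.uIcc θY θ) := by
    intro c hcmem
    have hsc : 0 < Real.sin c := hsinpos c (hsub hcmem)
    have e1 : Real.exp (2 * Real.log (Real.sin c)) = (Real.sin c) ^ 2 := by
      rw [show (2 : ℝ) * Real.log (Real.sin c) = Real.log ((Real.sin c) ^ 2) by
        rw [Real.log_pow]; push_cast; ring, Real.exp_log (by positivity)]
    have e2 : Real.exp (2 * Real.log (Real.sin θ)) = (Real.sin θ) ^ 2 := by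
      rw [show (2 : ℝ) * Real.log (Real.sin θ) = Real.log ((Real.sin θ) ^ 2) by
        rw [Real.log_pow]; push_cast; ring, Real.exp_log (by positivity)]
    simp only
    rw [hinner c hcmem, neg_sub, Real.exp_sub, e1, e2]
    field_simp
  -- value of the outer integral
  have hInt : (∫ c in θY..θ,
      Real.exp (-∫ α in c..θ, 2 * (Real.cos α / Real.sin α)) * ((τ c + τ'' c) / Real.sin c))
      = ((Real.sin θ) ^ 2)⁻¹ * (Real.sin θ * τ' θ - Real.cos θ * τ θ + τbd) := by
    rw [intervalIntegral.integral_congr hcongr, intervalIntegral.integral_const_mul]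
    congr 1
    have hFTC : (∫ c in θY..θ, Real.sin c * (τ c + τ'' c))
        = (Real.sin θ * τ' θ - Real.cos θ * τ θ)
          - (Real.sin θY * τ' θY - Real.cos θY * τ θY) := by
      apply intervalIntegral.integral_eq_sub_of_hasDerivAt
        (f := fun c => Real.sin c * τ' c - Real.cos c * τ c)
      · intro t ht
        have h := ((Real.hasDerivAt_sin t).mul (hd2 t (hsub ht))).sub
          ((Real.hasDerivAt_cos t).mul (hd1 t (hsub ht)))
        convert h using 1
        · rfl
        ring
      · apply ContinuousOn.intervalIntegrable
        exact Real.continuous_sin.continuousOn.mul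
          (((hτcont.mono hsub).add (hc.mono hsub)))
    rw [hFTC]
    linarith [hHY]
  rw [hInt]
  -- compute the derivative
  have heq : (fun t => g t x)
      = fun t => τ t * x / Real.sin t + τbd * (1 / 2 - x * (Real.cos t / Real.sin t)) := by
    funext t
    rw [hg, Real.tan_eq_sin_div_cos]
    rw [show x / (Real.sin t / Real.cos t) = x * (Real.cos t / Real.sin t) by
      rw [div_div_eq_mul_div, mul_div_assoc]]
  rw [heq]
  have h1 : HasDerivAt (fun t => τ t * x / Real.sin t)
      ((τ' θ * x * Real.sin θ - τ θ * x * Real.cos θ) / Real.sin θ ^ 2) θ :=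
    ((hd1 θ hθ).mul_const x).div (Real.hasDerivAt_sin θ) hsθ.ne'
  have h2 : HasDerivAt (fun t => x * (Real.cos t / Real.sin t))
      ((-Real.sin θ * Real.sin θ - Real.cos θ * Real.cos θ) / Real.sin θ ^ 2 * x) θ := by
    have := ((Real.hasDerivAt_cos θ).div (Real.hasDerivAt_sin θ) hsθ.ne').const_mul x
    convert this using 1
    · rfl
    · rfl
    · rfl
    ring
  have h3 : HasDerivAt (fun t => τbd * (1 / 2 - x * (Real.cos t / Real.sin t)))
      (τbd * (0 - (-Real.sin θ * Real.sin θ - Real.cos θ * Real.cos θ) / Real.sin θ ^ 2 * x)) θ :=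
    ((hasDerivAt_const θ ((1 : ℝ) / 2)).sub h2).const_mul τbd
  have htot := h1.add h3
  convert htot using 1
  · rfl
  · rfl
  · rfl
  have hpy : Real.sin θ ^ 2 + Real.cos θ ^ 2 = 1 := Real.sin_sq_add_cos_sq θ
  field_simp
  linear_combination (-(x * τbd)) * hpy
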